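/- Let (A,(p_l)) be a Fréchet algebra with a bounded approximate identity and let n ∈ ℕ. Then the unitization A# is 2n-weakly amenable if and only if A is 2n-weakly amenable. -/

import Mathlib

noncomputable section

open Filter Topology

/-- A topological `ℂ`-module `X` equipped with left and right actions of `A`,
each acting by continuous linear maps on `X`.  This is the data underlying a
locally convex `A`-bimodule. -/
structure BiMod (A : Type) : Type 1 where
  X : Type
  [ag : AddCommGroup X]
  [md : Module ℂ X]
  [ts : TopologicalSpace X]
  l : A → X →L[ℂ] X
  r : A → X →L[ℂ] X

attribute [instance] BiMod.ag BiMod.md BiMod.ts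

namespace BiMod

variable {A : Type}

/-- The strong dual of a bimodule, with the canonical dual actions
`⟨a·f, x⟩ = ⟨f, x·a⟩` and `⟨f·a, x⟩ = ⟨f, a·x⟩`.  The dual carries the strong
topology (uniform convergence on von Neumann bounded sets), which is the default
topology on `X →L[ℂ] ℂ` in Mathlib. -/
def dual (M : BiMod A) : BiMod A where
  X := M.X →L[ℂ] ℂ
  l a := ContinuousLinearMap.precomp ℂ (M.r a)
  r a := ContinuousLinearMap.precomp ℂ (M.l a)

/-- The `n`-th iterated strong dual of a bimodule (`iterDual M 0 = M`). -/
def iterDual (M : BiMod A) : ℕ → BiMod A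
  | 0 => M
  | n + 1 => (M.iterDual n).dual

instance dualCSM (M : BiMod A) : ContinuousSMul ℂ (M.dual).X :=
  inferInstanceAs (ContinuousSMul ℂ (M.X →L[ℂ] ℂ))

/-- Evaluation (canonical) embedding of a bimodule into its double dual. -/
def evalEmbed (M : BiMod A) [ContinuousSMul ℂ M.X] (x : M.X) : M.dual.dual.X :=
  show (M.X →L[ℂ] ℂ) →L[ℂ] ℂ from
    ⟨⟨⟨fun f => f x, fun _ _ => rfl⟩, fun _ _ => rfl⟩, continuous_eval_const x⟩

/-- `ContinuousSMul` holds at every level of the iterated dual. -/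
def iterCSM (M : BiMod A) (h : ContinuousSMul ℂ M.X) :
    ∀ n, ContinuousSMul ℂ (M.iterDual n).X
  | 0 => h
  | n + 1 => inferInstanceAs (ContinuousSMul ℂ ((M.iterDual n).X →L[ℂ] ℂ))

/-- The canonical (iterated evaluation) embedding `M → M^(2n)`. -/
def iterEmbed (M : BiMod A) (h : ContinuousSMul ℂ M.X) :
    ∀ n : ℕ, M.X → (M.iterDual (2 * n)).X
  | 0, x => x
  | n + 1, x =>
    haveI := M.iterCSM h (2 * n)
    (M.iterDual (2 * n)).evalEmbed (M.iterEmbed h n x)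

/-- The pairing between the `(k+1)`-st dual and the `k`-th dual. -/
def pairApply (M : BiMod A) (k : ℕ) (F : (M.iterDual (k + 1)).X)
    (x : (M.iterDual k).X) : ℂ := (show (M.iterDual k).X →L[ℂ] ℂ from F) x

end BiMod

section Defs

variable (A : Type) [NonUnitalRing A] [Module ℂ A] [SMulCommClass ℂ A A] [IsScalarTower ℂ A A]
  [TopologicalSpace A] [IsTopologicalAddGroup A] [ContinuousSMul ℂ A] [ContinuousMul A]

/-- A continuous derivation from `A` into a bimodule. -/
def IsContDerivation (M : BiMod A) (D : A →L[ℂ] M.X) : Prop :=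
  ∀ a b : A, D (a * b) = M.l a (D b) + M.r b (D a)

/-- An inner derivation : `D a = a·x - x·a` for some `x`. -/
def IsInnerDerivation (M : BiMod A) (D : A →L[ℂ] M.X) : Prop :=
  ∃ x : M.X, ∀ a : A, D a = M.l a x - M.r a x

/-- `A` as a bimodule over itself, via left/right multiplication. -/
def selfBiMod : BiMod A where
  X := A
  l a := ⟨LinearMap.mulLeft ℂ a, continuous_mul_left a⟩
  r a := ⟨LinearMap.mulRight ℂ a, continuous_mul_right a⟩

/-- `A` is `n`-weakly amenable if every continuous derivation from `A` into the
`n`-th iterated strong dual `A^(n)` (with the canonical module actions) is inner. -/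
def NWeaklyAmenable (n : ℕ) : Prop :=
  ∀ D : A →L[ℂ] ((selfBiMod A).iterDual n).X,
    IsContDerivation A ((selfBiMod A).iterDual n) D →
      IsInnerDerivation A ((selfBiMod A).iterDual n) D

/-- A closed two-sided ideal `I` of `A` (a closed `ℂ`-subalgebra which absorbs
multiplication on both sides) as an `A`-bimodule. -/
def idealBiMod (I : NonUnitalSubalgebra ℂ A)
    (hl : ∀ a : A, ∀ x ∈ I, a * x ∈ I) (hr : ∀ a : A, ∀ x ∈ I, x * a ∈ I) : BiMod A where
  X := ↥I
  l a := ⟨{ toFun := fun x => (⟨a * (x : A), hl a x x.2⟩ : ↥I)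
            map_add' := fun x y => by ext; simp [mul_add]
            map_smul' := fun c x => by ext; simp [mul_smul_comm] },
          (Continuous.subtype_mk ((continuous_mul_left a).comp continuous_subtype_val) _)⟩
  r a := ⟨{ toFun := fun x => (⟨(x : A) * a, hr a x x.2⟩ : ↥I)
            map_add' := fun x y => by ext; simp [add_mul]
            map_smul' := fun c x => by ext; simp [smul_mul_assoc] },
          (Continuous.subtype_mk ((continuous_mul_right a).comp continuous_subtype_val) _)⟩

/-- `A` is `n`-ideally amenable if for every closed two-sided ideal `I` of `A`,
every continuous derivation from `A` into `I^(n)` is inner. -/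
def NIdeallyAmenable (n : ℕ) : Prop :=
  ∀ (I : NonUnitalSubalgebra ℂ A), IsClosed (I : Set A) →
    ∀ (hl : ∀ a : A, ∀ x ∈ I, a * x ∈ I) (hr : ∀ a : A, ∀ x ∈ I, x * a ∈ I),
      ∀ D : A →L[ℂ] ((idealBiMod A I hl hr).iterDual n).X,
        IsContDerivation A ((idealBiMod A I hl hr).iterDual n) D →
          IsInnerDerivation A ((idealBiMod A I hl hr).iterDual n) D

/-- The topology of `A` is generated by an increasing sequence of submultiplicative
seminorms.  Together with completeness and Hausdorffness this says that `A` is a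
Fréchet algebra. -/
def FrechetSeminorms : Prop :=
  ∃ p : SeminormFamily ℂ A ℕ, WithSeminorms p ∧ (∀ n, p n ≤ p (n + 1)) ∧
    ∀ (n : ℕ) (x y : A), p n (x * y) ≤ p n x * p n y

/-- `A` has an identity element. -/
def HasIdentity : Prop := ∃ e : A, ∀ a : A, e * a = a ∧ a * e = a

end Defs

section Montel

variable (E : Type) [AddCommGroup E] [Module ℂ E] [TopologicalSpace E]

/-- A Montel space: a barrelled locally convex Hausdorff space in which every closed
(von Neumann) bounded subset is compact. -/
def IsMontelSpace : Prop :=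
  LocallyConvexSpace ℝ E ∧ T2Space E ∧ BarrelledSpace ℂ E ∧
    ∀ s : Set E, IsClosed s → Bornology.IsVonNBounded ℂ s → IsCompact s

end Montel

section More

variable (A : Type) [NonUnitalRing A] [Module ℂ A] [SMulCommClass ℂ A A] [IsScalarTower ℂ A A]
  [TopologicalSpace A] [IsTopologicalAddGroup A] [ContinuousSMul ℂ A] [ContinuousMul A]

/-- A bounded approximate identity: a bounded net `(e_i)` with `e_i * a → a` and
`a * e_i → a` for every `a`. -/
def HasBoundedApproxIdentity : Prop :=
  ∃ (ι : Type) (_ : Preorder ι) (_ : IsDirected ι (· ≤ ·)) (_ : Nonempty ι) (e : ι → A),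
    Bornology.IsVonNBounded ℂ (Set.range e) ∧
      ∀ a : A, Tendsto (fun i => e i * a) atTop (𝓝 a) ∧
        Tendsto (fun i => a * e i) atTop (𝓝 a)

/-- `A` is essential: the linear span of products is dense. -/
def IsEssential : Prop :=
  Dense ((Submodule.span ℂ {x : A | ∃ a b : A, x = a * b} : Submodule ℂ A) : Set A)

/-- `A` is self-induced: it is essential and every balanced bilinear functional
`φ` (i.e. `φ (a*c) b = φ a (c*b)`) is of the form `φ a b = f (a*b)` for some
continuous linear functional `f`. -/
def SelfInduced : Prop :=
  IsEssential A ∧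
    ∀ φ : A →ₗ[ℂ] A →ₗ[ℂ] ℂ, (∀ a b c : A, φ (a * c) b = φ a (c * b)) →
      ∃ f : A →L[ℂ] ℂ, ∀ a b : A, φ a b = f (a * b)

/-- The data of `M : BiMod A` constitutes a genuine locally convex `A`-bimodule:
the actions satisfy the bimodule laws, are `ℂ`-bilinear, jointly continuous, and
`M.X` is locally convex. -/
structure IsLCBimod (M : BiMod A) : Prop where
  lc : LocallyConvexSpace ℝ M.X
  l_mul : ∀ (a b : A) (x : M.X), M.l (a * b) x = M.l a (M.l b x)
  r_mul : ∀ (a b : A) (x : M.X), M.r (a * b) x = M.r b (M.r a x)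
  l_add : ∀ (a b : A) (x : M.X), M.l (a + b) x = M.l a x + M.l b x
  r_add : ∀ (a b : A) (x : M.X), M.r (a + b) x = M.r a x + M.r b x
  l_smul : ∀ (c : ℂ) (a : A) (x : M.X), M.l (c • a) x = c • M.l a x
  r_smul : ∀ (c : ℂ) (a : A) (x : M.X), M.r (c • a) x = c • M.r a x
  lr_comm : ∀ (a b : A) (x : M.X), M.l a (M.r b x) = M.r b (M.l a x)
  cont_l : Continuous fun q : A × M.X => M.l q.1 q.2
  cont_r : Continuous fun q : A × M.X => M.r q.1 q.2

/-- `A` is amenable: for every locally convex `A`-bimodule `X`, every continuous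
derivation from `A` into the strong dual `X*` (with the canonical dual actions)
is inner. -/
def Amenable : Prop :=
  ∀ M : BiMod A, IsLCBimod A M →
    ∀ D : A →L[ℂ] M.dual.X, IsContDerivation A M.dual D → IsInnerDerivation A M.dual D

end More

section UnitizationInstances

variable (A : Type) [NonUnitalRing A] [Module ℂ A] [SMulCommClass ℂ A A] [IsScalarTower ℂ A A]
  [TopologicalSpace A] [IsTopologicalAddGroup A] [ContinuousSMul ℂ A] [ContinuousMul A]

/-- The unitization `A# = ℂ ⊕ A` carries the product topology, which is the topology
generated by the seminorms `q_l (a, λ) = p_l a + |λ|`. -/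
instance : TopologicalSpace (Unitization ℂ A) :=
  TopologicalSpace.induced Unitization.toProd (inferInstance : TopologicalSpace (ℂ × A))

instance : IsTopologicalAddGroup (Unitization ℂ A) :=
  topologicalAddGroup_induced (Unitization.addEquiv ℂ A)

instance : ContinuousSMul ℂ (Unitization ℂ A) :=
  continuousSMul_induced (Unitization.linearEquiv ℂ ℂ A)

instance : ContinuousMul (Unitization ℂ A) where
  continuous_mul := by
    apply continuous_induced_rng.2
    have h : Continuous fun p : Unitization ℂ A × Unitization ℂ A => (p.1.toProd, p.2.toProd) :=
      (continuous_induced_dom.comp continuous_fst).prodMk (continuous_induced_dom.comp continuous_snd)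
    have h2 : Continuous fun p : (ℂ × A) × ℂ × A =>
        ((p.1.1 * p.2.1, p.1.1 • p.2.2 + p.2.1 • p.1.2 + p.1.2 * p.2.2) : ℂ × A) := by
      fun_prop
    exact h2.comp h

end UnitizationInstances



/-! ### Auxiliary development -/

set_option linter.unusedSectionVars false

section Aux

variable (A : Type) [NonUnitalRing A] [Module ℂ A] [SMulCommClass ℂ A A] [IsScalarTower ℂ A A]
  [TopologicalSpace A] [IsTopologicalAddGroup A] [ContinuousSMul ℂ A] [ContinuousMul A]

abbrev MB (k : ℕ) : BiMod (Unitization ℂ A) := (selfBiMod (Unitization ℂ A)).iterDual k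
abbrev NA (k : ℕ) : BiMod A := (selfBiMod A).iterDual k

/-- view an element of the `(m+1)`-st dual as a continuous linear functional. -/
def asF {m : ℕ} (F : (MB A (m+1)).X) : (MB A m).X →L[ℂ] ℂ := F
/-- view a continuous linear functional as an element of the `(m+1)`-st dual. -/
def upF {m : ℕ} (f : (MB A m).X →L[ℂ] ℂ) : (MB A (m+1)).X := f
def asG {m : ℕ} (F : (NA A (m+1)).X) : (NA A m).X →L[ℂ] ℂ := F
def upG {m : ℕ} (f : (NA A m).X →L[ℂ] ℂ) : (NA A (m+1)).X := f
/-- view a level-zero element as an element of the algebra. -/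
def eB (x : (MB A 0).X) : Unitization ℂ A := x
def eA (x : (NA A 0).X) : A := x

/-- canonical inclusion `A → A#` as a CLM. -/
def jC : A →L[ℂ] Unitization ℂ A :=
  ⟨Unitization.inrHom ℂ ℂ A,
    continuous_induced_rng.2
      (show Continuous fun a : A => ((0 : ℂ), a) from continuous_const.prodMk continuous_id)⟩

/-- canonical projection `A# → A` as a CLM. -/
def qC : Unitization ℂ A →L[ℂ] A :=
  ⟨Unitization.sndHom ℂ ℂ A,
    (show Continuous fun x : ℂ × A => x.2 from continuous_snd).comp continuous_induced_dom⟩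

/-- scalar-part projection `A# → ℂ` as a CLM. -/
def fstC : Unitization ℂ A →L[ℂ] ℂ :=
  ⟨{ toFun := fun x => x.fst
     map_add' := Unitization.fst_add
     map_smul' := fun c x => by simp [Unitization.fst_smul] },
    (show Continuous fun x : ℂ × A => x.1 from continuous_fst).comp continuous_induced_dom⟩

@[simp] lemma jC_apply (a : A) : jC A a = (a : Unitization ℂ A) := rfl
@[simp] lemma qC_apply (x : Unitization ℂ A) : qC A x = x.snd := rfl
@[simp] lemma fstC_apply (x : Unitization ℂ A) : fstC A x = x.fst := rfl

/-- the even levels of the dualized-inclusion chain. -/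
def fE : (k : ℕ) → (NA A (2*k)).X →L[ℂ] (MB A (2*k)).X
  | 0 => jC A
  | k+1 => ContinuousLinearMap.precomp ℂ (ContinuousLinearMap.precomp ℂ (fE k))

/-- the even levels of the dualized-projection chain. -/
def gE : (k : ℕ) → (MB A (2*k)).X →L[ℂ] (NA A (2*k)).X
  | 0 => qC A
  | k+1 => ContinuousLinearMap.precomp ℂ (ContinuousLinearMap.precomp ℂ (gE k))

/-- odd level of the inclusion chain. -/
def fO (k : ℕ) : (MB A (2*k+1)).X →L[ℂ] (NA A (2*k+1)).X :=
  ContinuousLinearMap.precomp ℂ (fE A k)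

/-- odd level of the projection chain. -/
def gO (k : ℕ) : (NA A (2*k+1)).X →L[ℂ] (MB A (2*k+1)).X :=
  ContinuousLinearMap.precomp ℂ (gE A k)

/-- the canonical functionals `β_{2k}` detecting the scalar part. -/
def betaE : (k : ℕ) → ((MB A (2*k)).X →L[ℂ] ℂ)
  | 0 => fstC A
  | k+1 =>
    haveI := (selfBiMod (Unitization ℂ A)).iterCSM
      (show ContinuousSMul ℂ (Unitization ℂ A) by infer_instance) (2*k+1)
    show (MB A (2*k+1)).dual.X →L[ℂ] ℂ from (MB A (2*k+1)).evalEmbed (upF A (betaE k))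

/-- the canonical vectors `E_{2k}` generating the scalar part. -/
def Eev : (k : ℕ) → (MB A (2*k)).X
  | 0 => (1 : Unitization ℂ A)
  | k+1 =>
    haveI := (selfBiMod (Unitization ℂ A)).iterCSM
      (show ContinuousSMul ℂ (Unitization ℂ A) by infer_instance) (2*k)
    (MB A (2*k)).evalEmbed (Eev k)

/-- the canonical embedding of `A` into its even duals. -/
def kap (k : ℕ) : A → (NA A (2*k)).X :=
  (selfBiMod A).iterEmbed (show ContinuousSMul ℂ A by infer_instance) k

/-- the unit of `A#` acts trivially at every level. -/
lemma act_one : ∀ m : ℕ, (∀ F : (MB A m).X, (MB A m).l 1 F = F) ∧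
    (∀ F : (MB A m).X, (MB A m).r 1 F = F) := by
  intro m
  induction m with
  | zero => exact ⟨fun F => one_mul (eB A F), fun F => mul_one (eB A F)⟩
  | succ m ih =>
    constructor
    · intro ψ
      refine ContinuousLinearMap.ext fun F => ?_
      show asF A ψ ((MB A m).r 1 F) = asF A ψ F
      rw [ih.2 F]
    · intro ψ
      refine ContinuousLinearMap.ext fun F => ?_
      show asF A ψ ((MB A m).l 1 F) = asF A ψ F
      rw [ih.1 F]

/-- additivity of the actions in the algebra variable. -/
lemma act_add : ∀ m : ℕ, (∀ (x y : Unitization ℂ A) (F : (MB A m).X),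
      (MB A m).l (x + y) F = (MB A m).l x F + (MB A m).l y F) ∧
    (∀ (x y : Unitization ℂ A) (F : (MB A m).X),
      (MB A m).r (x + y) F = (MB A m).r x F + (MB A m).r y F) := by
  intro m
  induction m with
  | zero => exact ⟨fun x y F => add_mul x y (eB A F), fun x y F => mul_add (eB A F) x y⟩
  | succ m ih =>
    constructor
    · intro x y ψ
      refine ContinuousLinearMap.ext fun F => ?_
      show asF A ψ ((MB A m).r (x + y) F)
        = asF A ψ ((MB A m).r x F) + asF A ψ ((MB A m).r y F)
      rw [ih.2 x y F, map_add]
    · intro x y ψ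
      refine ContinuousLinearMap.ext fun F => ?_
      show asF A ψ ((MB A m).l (x + y) F)
        = asF A ψ ((MB A m).l x F) + asF A ψ ((MB A m).l y F)
      rw [ih.1 x y F, map_add]

/-- homogeneity of the actions in the algebra variable. -/
lemma act_smul : ∀ m : ℕ, (∀ (c : ℂ) (x : Unitization ℂ A) (F : (MB A m).X),
      (MB A m).l (c • x) F = c • (MB A m).l x F) ∧
    (∀ (c : ℂ) (x : Unitization ℂ A) (F : (MB A m).X),
      (MB A m).r (c • x) F = c • (MB A m).r x F) := by
  intro m
  induction m with
  | zero => exact ⟨fun c x F => smul_mul_assoc c x (eB A F), fun c x F => mul_smul_comm c (eB A F) x⟩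
  | succ m ih =>
    constructor
    · intro c x ψ
      refine ContinuousLinearMap.ext fun F => ?_
      show asF A ψ ((MB A m).r (c • x) F) = c • asF A ψ ((MB A m).r x F)
      rw [ih.2 c x F, map_smul]
    · intro c x ψ
      refine ContinuousLinearMap.ext fun F => ?_
      show asF A ψ ((MB A m).l (c • x) F) = c • asF A ψ ((MB A m).l x F)
      rw [ih.1 c x F, map_smul]

lemma unit_decomp (x : Unitization ℂ A) :
    x = jC A (qC A x) + x.fst • 1 := by
  refine (Unitization.ext ?_ ?_).symm <;>
    simp [Unitization.fst_smul, Unitization.snd_smul]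

/-- decomposition of the actions according to `x = j (q x) + (fst x) • 1`. -/
lemma act_decomp_l (m : ℕ) (x : Unitization ℂ A) (F : (MB A m).X) :
    (MB A m).l x F = (MB A m).l (jC A (qC A x)) F + x.fst • F := by
  conv_lhs => rw [unit_decomp A x]
  rw [(act_add A m).1, (act_smul A m).1, (act_one A m).1]

lemma act_decomp_r (m : ℕ) (x : Unitization ℂ A) (F : (MB A m).X) :
    (MB A m).r x F = (MB A m).r (jC A (qC A x)) F + x.fst • F := by
  conv_lhs => rw [unit_decomp A x]
  rw [(act_add A m).2, (act_smul A m).2, (act_one A m).2]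

/-- `fE` is an `A`-bimodule map. -/
lemma fE_mod : ∀ k : ℕ, (∀ (a : A) (Φ : (NA A (2*k)).X),
      fE A k ((NA A (2*k)).l a Φ) = (MB A (2*k)).l (jC A a) (fE A k Φ)) ∧
    (∀ (a : A) (Φ : (NA A (2*k)).X),
      fE A k ((NA A (2*k)).r a Φ) = (MB A (2*k)).r (jC A a) (fE A k Φ)) := by
  intro k
  induction k with
  | zero =>
    exact ⟨fun a b => Unitization.inr_mul ℂ a (eA A b), fun a b => Unitization.inr_mul ℂ (eA A b) a⟩
  | succ k ih =>
    constructor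
    · intro a Φ
      refine ContinuousLinearMap.ext fun ψ => ?_
      show asG A Φ ((NA A (2*k+1)).r a (fO A k ψ))
        = asG A Φ (fO A k ((MB A (2*k+1)).r (jC A a) ψ))
      congr 1
      refine ContinuousLinearMap.ext fun F => ?_
      show asF A ψ (fE A k ((NA A (2*k)).l a F))
        = asF A ψ ((MB A (2*k)).l (jC A a) (fE A k F))
      rw [ih.1 a F]
    · intro a Φ
      refine ContinuousLinearMap.ext fun ψ => ?_
      show asG A Φ ((NA A (2*k+1)).l a (fO A k ψ))
        = asG A Φ (fO A k ((MB A (2*k+1)).l (jC A a) ψ))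
      congr 1
      refine ContinuousLinearMap.ext fun F => ?_
      show asF A ψ (fE A k ((NA A (2*k)).r a F))
        = asF A ψ ((MB A (2*k)).r (jC A a) (fE A k F))
      rw [ih.2 a F]

/-- `gE` is an `A`-bimodule map up to an explicit scalar defect. -/
lemma gE_mod : ∀ k : ℕ, (∀ (a : A) (F : (MB A (2*k)).X),
      gE A k ((MB A (2*k)).l (jC A a) F)
        = (NA A (2*k)).l a (gE A k F) + (betaE A k F) • kap A k a) ∧
    (∀ (a : A) (F : (MB A (2*k)).X),
      gE A k ((MB A (2*k)).r (jC A a) F)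
        = (NA A (2*k)).r a (gE A k F) + (betaE A k F) • kap A k a) := by
  intro k
  induction k with
  | zero =>
    constructor
    · intro a x
      show (jC A a * eB A x).snd = a * (eB A x).snd + (eB A x).fst • a
      simp only [jC_apply, Unitization.snd_mul, Unitization.fst_inr, Unitization.snd_inr,
        zero_smul, zero_add]
      exact add_comm _ _
    · intro a x
      show (eB A x * jC A a).snd = (eB A x).snd * a + (eB A x).fst • a
      simp only [jC_apply, Unitization.snd_mul, Unitization.fst_inr, Unitization.snd_inr,
        zero_smul, add_zero, zero_add]
      exact add_comm _ _
  | succ k ih =>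
    constructor
    · intro a G
      refine ContinuousLinearMap.ext fun ψ => ?_
      have h1 : (MB A (2*k+1)).r (jC A a) (gO A k ψ)
          = gO A k ((NA A (2*k+1)).r a ψ) + asG A ψ (kap A k a) • upF A (betaE A k) := by
        refine ContinuousLinearMap.ext fun F => ?_
        show asG A ψ (gE A k ((MB A (2*k)).l (jC A a) F))
          = asF A (gO A k ((NA A (2*k+1)).r a ψ) + asG A ψ (kap A k a) • upF A (betaE A k)) F
        rw [ih.1 a F, map_add, map_smul]
        show asG A ψ ((NA A (2*k)).l a (gE A k F)) + betaE A k F • asG A ψ (kap A k a)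
          = asG A ψ ((NA A (2*k)).l a (gE A k F)) + asG A ψ (kap A k a) • betaE A k F
        simp only [smul_eq_mul]; ring
      show asF A G ((MB A (2*k+1)).r (jC A a) (gO A k ψ))
        = asG A ((NA A (2*(k+1))).l a (gE A (k+1) G) + betaE A (k+1) G • kap A (k+1) a) ψ
      rw [h1, map_add, map_smul]
      show asF A G (gO A k ((NA A (2*k+1)).r a ψ))
            + asG A ψ (kap A k a) • asF A G (upF A (betaE A k))
        = asF A G (gO A k ((NA A (2*k+1)).r a ψ))
            + asF A G (upF A (betaE A k)) • asG A ψ (kap A k a)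
      simp only [smul_eq_mul]; ring
    · intro a G
      refine ContinuousLinearMap.ext fun ψ => ?_
      have h1 : (MB A (2*k+1)).l (jC A a) (gO A k ψ)
          = gO A k ((NA A (2*k+1)).l a ψ) + asG A ψ (kap A k a) • upF A (betaE A k) := by
        refine ContinuousLinearMap.ext fun F => ?_
        show asG A ψ (gE A k ((MB A (2*k)).r (jC A a) F))
          = asF A (gO A k ((NA A (2*k+1)).l a ψ) + asG A ψ (kap A k a) • upF A (betaE A k)) F
        rw [ih.2 a F, map_add, map_smul]
        show asG A ψ ((NA A (2*k)).r a (gE A k F)) + betaE A k F • asG A ψ (kap A k a)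
          = asG A ψ ((NA A (2*k)).r a (gE A k F)) + asG A ψ (kap A k a) • betaE A k F
        simp only [smul_eq_mul]; ring
      show asF A G ((MB A (2*k+1)).l (jC A a) (gO A k ψ))
        = asG A ((NA A (2*(k+1))).r a (gE A (k+1) G) + betaE A (k+1) G • kap A (k+1) a) ψ
      rw [h1, map_add, map_smul]
      show asF A G (gO A k ((NA A (2*k+1)).l a ψ))
            + asG A ψ (kap A k a) • asF A G (upF A (betaE A k))
        = asF A G (gO A k ((NA A (2*k+1)).l a ψ))
            + asF A G (upF A (betaE A k)) • asG A ψ (kap A k a)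
      simp only [smul_eq_mul]; ring

/-- the functionals `βE k`, viewed as vectors at odd levels, are annihilated by `A`. -/
lemma beta_ann : ∀ k : ℕ, (∀ a : A,
      (MB A (2*k+1)).l (jC A a) (upF A (betaE A k)) = 0) ∧
    (∀ a : A, (MB A (2*k+1)).r (jC A a) (upF A (betaE A k)) = 0) := by
  intro k
  induction k with
  | zero =>
    constructor
    · intro a
      refine ContinuousLinearMap.ext fun x => ?_
      show (eB A x * jC A a).fst = (0 : ℂ)
      simp
    · intro a
      refine ContinuousLinearMap.ext fun x => ?_
      show (jC A a * eB A x).fst = (0 : ℂ)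
      simp
  | succ k ih =>
    constructor
    · intro a
      refine ContinuousLinearMap.ext fun G => ?_
      show asF A G ((MB A (2*k+1)).l (jC A a) (upF A (betaE A k))) = (0 : ℂ)
      rw [ih.1 a]
      exact map_zero _
    · intro a
      refine ContinuousLinearMap.ext fun G => ?_
      show asF A G ((MB A (2*k+1)).r (jC A a) (upF A (betaE A k))) = (0 : ℂ)
      rw [ih.2 a]
      exact map_zero _

/-- `βE` kills everything in the range of the `A`-actions. -/
lemma beta_kill (k : ℕ) :
    (∀ (a : A) (F : (MB A (2*k)).X), betaE A k ((MB A (2*k)).l (jC A a) F) = 0) ∧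
    (∀ (a : A) (F : (MB A (2*k)).X), betaE A k ((MB A (2*k)).r (jC A a) F) = 0) := by
  cases k with
  | zero =>
    constructor
    · intro a x; show ((jC A a * eB A x)).fst = 0; simp
    · intro a x; show ((eB A x * jC A a)).fst = 0; simp
  | succ k =>
    constructor
    · intro a F
      show asF A F ((MB A (2*k+1)).r (jC A a) (upF A (betaE A k))) = 0
      rw [(beta_ann A k).2 a]
      exact map_zero _
    · intro a F
      show asF A F ((MB A (2*k+1)).l (jC A a) (upF A (betaE A k))) = 0
      rw [(beta_ann A k).1 a]
      exact map_zero _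

/-- `gE ∘ fE = id`. -/
lemma gf_id : ∀ (k : ℕ) (Φ : (NA A (2*k)).X), gE A k (fE A k Φ) = Φ := by
  intro k
  induction k with
  | zero => intro a; show (Unitization.inr (eA A a) : Unitization ℂ A).snd = eA A a; simp
  | succ k ih =>
    intro Φ
    refine ContinuousLinearMap.ext fun ψ => ?_
    show asG A Φ (fO A k (gO A k ψ)) = asG A Φ ψ
    congr 1
    refine ContinuousLinearMap.ext fun F => ?_
    show asG A ψ (gE A k (fE A k F)) = asG A ψ F
    rw [ih F]

/-- `fE ∘ gE = id - βE ⊗ Eev`. -/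
lemma fg_dec : ∀ (k : ℕ) (F : (MB A (2*k)).X),
    fE A k (gE A k F) = F - (betaE A k F) • Eev A k := by
  intro k
  induction k with
  | zero =>
    intro x
    show (Unitization.inr (eB A x).snd : Unitization ℂ A) = eB A x - (eB A x).fst • 1
    refine Unitization.ext ?_ ?_ <;>
      simp [sub_eq_add_neg, Unitization.fst_smul, Unitization.snd_smul,
        Unitization.fst_neg, Unitization.snd_neg]
  | succ k ih =>
    intro G
    refine ContinuousLinearMap.ext fun ψ => ?_
    have h1 : gO A k (fO A k ψ) = ψ - asF A ψ (Eev A k) • upF A (betaE A k) := by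
      refine ContinuousLinearMap.ext fun F => ?_
      show asF A ψ (fE A k (gE A k F))
        = asF A (ψ - asF A ψ (Eev A k) • upF A (betaE A k)) F
      rw [ih F, map_sub, map_smul]
      show asF A ψ F - betaE A k F • asF A ψ (Eev A k)
        = asF A ψ F - asF A ψ (Eev A k) • betaE A k F
      simp only [smul_eq_mul]; ring
    show asF A G (gO A k (fO A k ψ))
      = asF A (G - betaE A (k+1) G • Eev A (k+1)) ψ
    rw [h1, map_sub, map_smul]
    show asF A G ψ - asF A ψ (Eev A k) • asF A G (upF A (betaE A k))
      = asF A G ψ - asF A G (upF A (betaE A k)) • asF A ψ (Eev A k)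
    simp only [smul_eq_mul]; ring

end Aux


/-- For a Fréchet algebra `A` with a bounded approximate identity, the unitization
`A#` is `2n`-weakly amenable iff `A` is `2n`-weakly amenable. -/
theorem unitization_even_weaklyAmenable_iff_of_bai (A : Type) [NonUnitalRing A] [Module ℂ A] [SMulCommClass ℂ A A]
    [IsScalarTower ℂ A A] [UniformSpace A] [IsUniformAddGroup A] [ContinuousSMul ℂ A]
    [ContinuousMul A] [CompleteSpace A] [T2Space A] (hA : FrechetSeminorms A)
    (hbai : HasBoundedApproxIdentity A) (n : ℕ) :
    NWeaklyAmenable (Unitization ℂ A) (2 * n) ↔ NWeaklyAmenable A (2 * n) := by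
  constructor
  · -- `A#` 2n-weakly amenable ⇒ `A` 2n-weakly amenable
    intro hB D hD
    set DB : Unitization ℂ A →L[ℂ] (MB A (2*n)).X :=
      (fE A n).comp (D.comp (qC A)) with hDBdef
    have hder : IsContDerivation (Unitization ℂ A) (MB A (2*n)) DB := by
      intro x y
      have hq : qC A (x * y) = x.fst • qC A y + y.fst • qC A x + qC A x * qC A y := by
        simp [Unitization.snd_mul]
      show fE A n (D (qC A (x * y)))
        = (MB A (2*n)).l x (fE A n (D (qC A y))) + (MB A (2*n)).r y (fE A n (D (qC A x)))
      rw [hq]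
      simp only [map_add, map_smul]
      rw [hD (qC A x) (qC A y)]
      simp only [map_add, map_smul]
      rw [(fE_mod A n).1, (fE_mod A n).2,
        act_decomp_l A (2*n) x (fE A n (D (qC A y))),
        act_decomp_r A (2*n) y (fE A n (D (qC A x)))]
      abel
    obtain ⟨G, hG⟩ := hB DB hder
    refine ⟨gE A n G, fun a => ?_⟩
    have h1 : DB (jC A a) = fE A n (D a) := by
      have hq0 : qC A (jC A a) = a := by simp
      show fE A n (D (qC A (jC A a))) = fE A n (D a)
      rw [hq0]
    calc D a = gE A n (fE A n (D a)) := (gf_id A n (D a)).symm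
      _ = gE A n (DB (jC A a)) := by rw [h1]
      _ = gE A n ((MB A (2*n)).l (jC A a) G - (MB A (2*n)).r (jC A a) G) := by
          rw [hG (jC A a)]
      _ = (NA A (2*n)).l a (gE A n G) - (NA A (2*n)).r a (gE A n G) := by
          rw [map_sub, (gE_mod A n).1 a G, (gE_mod A n).2 a G]
          abel
  · -- `A` 2n-weakly amenable ⇒ `A#` 2n-weakly amenable
    intro hA' D hD
    have hone : D 1 = 0 := by
      have h := hD 1 1
      rw [mul_one, (act_one A (2*n)).1, (act_one A (2*n)).2] at h
      exact left_eq_add.mp h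
    -- the scalar component of `D` restricted to `A` vanishes
    have hphi : ∀ a : A, betaE A n (D (jC A a)) = 0 := by
      have hprod : ∀ a b : A, betaE A n (D (jC A (a * b))) = 0 := by
        intro a b
        have hj : jC A (a * b) = jC A a * jC A b := Unitization.inr_mul ℂ a b
        rw [hj, hD (jC A a) (jC A b), map_add, (beta_kill A n).1, (beta_kill A n).2,
          add_zero]
      intro c
      obtain ⟨ι, ipre, idir, inon, e, hbdd, hconv⟩ := hbai
      haveI hne : (Filter.atTop : Filter ι).NeBot := Filter.atTop_neBot_iff.mpr ⟨inon, idir⟩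
      have hcont : Continuous fun a : A => betaE A n (D (jC A a)) :=
        ((betaE A n).comp (D.comp (jC A))).continuous
      have htend : Filter.Tendsto (fun i => betaE A n (D (jC A (e i * c)))) Filter.atTop
          (𝓝 (betaE A n (D (jC A c)))) :=
        (hcont.tendsto c).comp (hconv c).1
      have hzero : (fun i => betaE A n (D (jC A (e i * c)))) = fun _ => (0:ℂ) :=
        funext fun i => hprod (e i) c
      rw [hzero] at htend
      exact (tendsto_nhds_unique htend tendsto_const_nhds)
    set DA : A →L[ℂ] (NA A (2*n)).X := (gE A n).comp (D.comp (jC A)) with hDAdef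
    have hderA : IsContDerivation A (NA A (2*n)) DA := by
      intro a b
      have hj : jC A (a * b) = jC A a * jC A b := Unitization.inr_mul ℂ a b
      show gE A n (D (jC A (a * b))) = (NA A (2*n)).l a (DA b) + (NA A (2*n)).r b (DA a)
      rw [hj, hD (jC A a) (jC A b), map_add, (gE_mod A n).1 a (D (jC A b)),
        (gE_mod A n).2 b (D (jC A a)), hphi a, hphi b, zero_smul, zero_smul,
        add_zero, add_zero]
      rfl
    obtain ⟨x0, hx0⟩ := hA' DA hderA
    refine ⟨fE A n x0, fun y => ?_⟩
    have hDy : D y = D (jC A (qC A y)) := by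
      conv_lhs => rw [unit_decomp A y]
      rw [map_add, map_smul, hone, smul_zero, add_zero]
    have h2 : D (jC A (qC A y)) = fE A n (DA (qC A y)) := by
      have hdec := fg_dec A n (D (jC A (qC A y)))
      rw [hphi (qC A y), zero_smul, sub_zero] at hdec
      exact hdec.symm
    rw [hDy, h2, hx0 (qC A y), map_sub, (fE_mod A n).1, (fE_mod A n).2,
      act_decomp_l A (2*n) y (fE A n x0), act_decomp_r A (2*n) y (fE A n x0)]
    abel
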